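/- Under the hypotheses of the previous statement (P, Q positive definite, Riccati identity, feedback π(ξ) = −½ R⁻¹BᵀPξ), for all ξ and w one has ⟨∇V(ξ), Aξ + Bπ(ξ) + w⟩ ≤ −½ ξᵀQξ − ½ (‖Pξ‖/γ − γ‖w‖)² + ½ γ²‖w‖². In particular ⟨∇V(ξ), Aξ + Bπ(ξ) + w⟩ ≤ −½ λ_min(Q)‖ξ‖² + ½ γ²‖w‖², where λ_min(Q) is the smallest eigenvalue of Q. -/

import Mathlib

open Matrix RealInnerProductSpace

noncomputable def toE {n : ℕ} (x : Fin n → ℝ) : EuclideanSpace ℝ (Fin n) :=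
  (WithLp.equiv 2 (Fin n → ℝ)).symm x

lemma inner_toE {n : ℕ} (a : Fin n → ℝ) (x : EuclideanSpace ℝ (Fin n)) :
    ⟪toE a, x⟫ = a ⬝ᵥ (WithLp.equiv 2 (Fin n → ℝ) x) := by
  simp [toE, PiLp.inner_apply, dotProduct, mul_comm]

lemma inner_toE' {n : ℕ} (x : EuclideanSpace ℝ (Fin n)) (a : Fin n → ℝ) :
    ⟪x, toE a⟫ = (WithLp.equiv 2 (Fin n → ℝ) x) ⬝ᵥ a := by
  simp [toE, PiLp.inner_apply, dotProduct, mul_comm]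

-- eigenvalue bound: λmin ‖x‖² ≤ xᵀ Q x
lemma eig_bound {n : ℕ} (hn : 0 < n) (Q : Matrix (Fin n) (Fin n) ℝ) (hQ : Q.PosDef)
    (x : Fin n → ℝ) :
    (⨅ i, hQ.1.eigenvalues i) * (x ⬝ᵥ x) ≤ x ⬝ᵥ Q.mulVec x := by
  set c := ⨅ i, hQ.1.eigenvalues i with hc
  have hle : ∀ i, c ≤ hQ.1.eigenvalues i := fun i =>
    ciInf_le (Finite.bddBelow_range _) i
  have hps : (Q - c • 1).PosSemidef := by
    have hspec := hQ.1.spectral_theorem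
    have h1 : (1 : Matrix (Fin n) (Fin n) ℝ) =
        (hQ.1.eigenvectorUnitary : Matrix (Fin n) (Fin n) ℝ) * 1 *
          (star (hQ.1.eigenvectorUnitary : Matrix (Fin n) (Fin n) ℝ)) := by
      rw [mul_one, (Matrix.mem_unitaryGroup_iff).mp hQ.1.eigenvectorUnitary.2]
    have : Q - c • 1 =
        (hQ.1.eigenvectorUnitary : Matrix (Fin n) (Fin n) ℝ) *
          (diagonal (RCLike.ofReal ∘ hQ.1.eigenvalues) - c • 1) *
          (star (hQ.1.eigenvectorUnitary : Matrix (Fin n) (Fin n) ℝ)) := by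
      rw [Matrix.mul_sub, Matrix.sub_mul]
      nth_rewrite 1 [hspec]
      rw [Matrix.mul_smul, Matrix.smul_mul, mul_one,
        (Matrix.mem_unitaryGroup_iff).mp hQ.1.eigenvectorUnitary.2]
      rfl
    rw [this]
    apply Matrix.PosSemidef.mul_mul_conjTranspose_same
    have : diagonal (RCLike.ofReal ∘ hQ.1.eigenvalues) - c • (1 : Matrix (Fin n) (Fin n) ℝ)
        = diagonal (fun i => hQ.1.eigenvalues i - c) := by
      ext i j
      by_cases h : i = j <;>
        simp [Matrix.diagonal_apply, Matrix.one_apply, h, Matrix.sub_apply]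
    rw [this]
    exact Matrix.posSemidef_diagonal_iff.mpr fun i => sub_nonneg.mpr (hle i)
  have h0 := hps.dotProduct_mulVec_nonneg x
  have : x ⬝ᵥ ((Q - c • 1) *ᵥ x) = x ⬝ᵥ Q.mulVec x - c * (x ⬝ᵥ x) := by
    simp [Matrix.sub_mulVec, Matrix.smul_mulVec, dotProduct_sub, dotProduct_smul,
      smul_eq_mul]
  rw [show (star x : Fin n → ℝ) = x from rfl, this] at h0
  linarith

/-- completed-square form of the ISS-CLF bound, and the eigenvalue bound. -/
theorem stmt1 {n m : ℕ} (hn : 0 < n)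
    (P Q A : Matrix (Fin n) (Fin n) ℝ) (R : Matrix (Fin m) (Fin m) ℝ)
    (B : Matrix (Fin n) (Fin m) ℝ) (γ : ℝ)
    (hP : P.PosDef) (hQ : Q.PosDef) (hR : R.PosDef) (hγ : 0 < γ)
    (hRic : P * A + Aᵀ * P - P * B * R⁻¹ * Bᵀ * P = -Q - (γ ^ 2)⁻¹ • (P * P))
    (V : EuclideanSpace ℝ (Fin n) → ℝ)
    (hV : ∀ ξ, V ξ = (1 / 2) * ⟪ξ, toE (P.mulVec ξ)⟫)
    (π : EuclideanSpace ℝ (Fin n) → Fin m → ℝ)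
    (hπ : ∀ ξ, π ξ = (-(1 / 2) : ℝ) • (R⁻¹ * Bᵀ * P).mulVec ξ) :
    ∀ ξ w : EuclideanSpace ℝ (Fin n),
      (⟪toE (P.mulVec ξ), toE (A.mulVec ξ + B.mulVec (π ξ)) + w⟫ ≤
          -(1 / 2) * ⟪ξ, toE (Q.mulVec ξ)⟫
            - (1 / 2) * (‖toE (P.mulVec ξ)‖ / γ - γ * ‖w‖) ^ 2
            + (1 / 2) * γ ^ 2 * ‖w‖ ^ 2) ∧
      (⟪toE (P.mulVec ξ), toE (A.mulVec ξ + B.mulVec (π ξ)) + w⟫ ≤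
          -(1 / 2) * (⨅ i, hQ.1.eigenvalues i) * ‖ξ‖ ^ 2
            + (1 / 2) * γ ^ 2 * ‖w‖ ^ 2) := by
  intro ξ w
  have hγ2 : γ ^ 2 ≠ 0 := pow_ne_zero 2 hγ.ne'
  have hPsymm : Pᵀ = P := hP.1
  -- generic transfer
  have hPdot : ∀ y : Fin n → ℝ, (ξ : Fin n → ℝ) ⬝ᵥ (P *ᵥ y) = (P *ᵥ ξ) ⬝ᵥ y := by
    intro y
    rw [Matrix.dotProduct_mulVec, ← Matrix.mulVec_transpose, hPsymm]
  have key : (P.mulVec ξ) ⬝ᵥ (A.mulVec ξ + B.mulVec (π ξ)) =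
      -(1 / 2) * ((ξ : Fin n → ℝ) ⬝ᵥ Q.mulVec ξ)
        - (1 / (2 * γ ^ 2)) * ((P.mulVec ξ) ⬝ᵥ (P.mulVec ξ)) := by
    have hPA : (ξ : Fin n → ℝ) ⬝ᵥ ((P * A) *ᵥ ξ) = (P *ᵥ ξ) ⬝ᵥ (A *ᵥ ξ) := by
      rw [← Matrix.mulVec_mulVec, hPdot]
    have hAP : (ξ : Fin n → ℝ) ⬝ᵥ ((Aᵀ * P) *ᵥ ξ) = (P *ᵥ ξ) ⬝ᵥ (A *ᵥ ξ) := by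
      rw [← Matrix.mulVec_mulVec, Matrix.dotProduct_mulVec, Matrix.vecMul_transpose,
        dotProduct_comm]
    have hBR : (ξ : Fin n → ℝ) ⬝ᵥ ((P * B * R⁻¹ * Bᵀ * P) *ᵥ ξ)
        = (P *ᵥ ξ) ⬝ᵥ ((B * (R⁻¹ * Bᵀ * P)) *ᵥ ξ) := by
      have : P * B * R⁻¹ * Bᵀ * P = P * (B * (R⁻¹ * Bᵀ * P)) := by
        simp only [Matrix.mul_assoc]
      rw [this, ← Matrix.mulVec_mulVec, hPdot]
    have hPP : (ξ : Fin n → ℝ) ⬝ᵥ ((P * P) *ᵥ ξ) = (P *ᵥ ξ) ⬝ᵥ (P *ᵥ ξ) := by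
      rw [← Matrix.mulVec_mulVec, hPdot]
    have hπB : B.mulVec (π ξ) = (-(1 / 2) : ℝ) • ((B * (R⁻¹ * Bᵀ * P)) *ᵥ ξ) := by
      rw [hπ ξ, Matrix.mulVec_smul, Matrix.mulVec_mulVec]
    have hRq := congrArg (fun M => (ξ : Fin n → ℝ) ⬝ᵥ (M *ᵥ ξ)) hRic
    simp only [Matrix.sub_mulVec, Matrix.add_mulVec, Matrix.neg_mulVec,
      Matrix.smul_mulVec, dotProduct_sub, dotProduct_add, dotProduct_neg,
      dotProduct_smul, smul_eq_mul, hPA, hAP, hBR, hPP] at hRq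
    rw [dotProduct_add, hπB, dotProduct_smul, smul_eq_mul]
    have := hRq
    field_simp at this ⊢
    nlinarith [this]
  have hsplit : ⟪toE (P.mulVec ξ), toE (A.mulVec ξ + B.mulVec (π ξ)) + w⟫
      = (P.mulVec ξ) ⬝ᵥ (A.mulVec ξ + B.mulVec (π ξ)) + ⟪toE (P.mulVec ξ), w⟫ := by
    rw [inner_add_right, inner_toE]
    rfl
  have hcs : ⟪toE (P.mulVec ξ), w⟫ ≤ ‖toE (P.mulVec ξ)‖ * ‖w‖ := real_inner_le_norm _ _
  have hnorm : (P.mulVec ξ) ⬝ᵥ (P.mulVec ξ) = ‖toE (P.mulVec ξ)‖ ^ 2 := by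
    rw [← real_inner_self_eq_norm_sq, inner_toE]
    rfl
  have hQin : ⟪ξ, toE (Q.mulVec ξ)⟫ = (ξ : Fin n → ℝ) ⬝ᵥ Q.mulVec ξ := by
    rw [inner_toE']
    rfl
  have hξn : ‖ξ‖ ^ 2 = (ξ : Fin n → ℝ) ⬝ᵥ (ξ : Fin n → ℝ) := by
    rw [← real_inner_self_eq_norm_sq]
    rw [EuclideanSpace.inner_eq_star_dotProduct]
    rfl
  set a := ‖toE (P.mulVec ξ)‖ with ha
  set b := ‖w‖ with hb
  have hident : -(1 / (2 * γ ^ 2)) * a ^ 2 + a * b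
      = -(1 / 2) * (a / γ - γ * b) ^ 2 + (1 / 2) * γ ^ 2 * b ^ 2 := by
    field_simp
    ring
  have h1 : ⟪toE (P.mulVec ξ), toE (A.mulVec ξ + B.mulVec (π ξ)) + w⟫ ≤
      -(1 / 2) * ⟪ξ, toE (Q.mulVec ξ)⟫
        - (1 / 2) * (a / γ - γ * b) ^ 2 + (1 / 2) * γ ^ 2 * b ^ 2 := by
    rw [hsplit, key, hQin, hnorm]
    linarith
  refine ⟨h1, ?_⟩
  have h2 := eig_bound hn Q hQ ξ
  have hsq : 0 ≤ (a / γ - γ * b) ^ 2 := sq_nonneg _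
  calc ⟪toE (P.mulVec ξ), toE (A.mulVec ξ + B.mulVec (π ξ)) + w⟫
      ≤ -(1 / 2) * ⟪ξ, toE (Q.mulVec ξ)⟫ - (1 / 2) * (a / γ - γ * b) ^ 2
          + (1 / 2) * γ ^ 2 * b ^ 2 := h1
    _ ≤ -(1 / 2) * (⨅ i, hQ.1.eigenvalues i) * ‖ξ‖ ^ 2 + (1 / 2) * γ ^ 2 * b ^ 2 := by
        rw [hQin, hξn]
        nlinarith [h2]
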